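/- For every β > 0 and K > 0: min_{μ ∈ P} {R(μ|ρ_β) − βK (μ₁ − μ₋₁)²} = min_{z ∈ [−1,1]} {J_β(z) − βK z²}, and both minima are attained. -/

import Mathlib

noncomputable section

/-- `μ = (μ₋₁, μ₀, μ₁)` is a probability vector on `Λ = {-1,0,1}`. -/
def IsProbVec (μ : ℝ × ℝ × ℝ) : Prop :=
  0 ≤ μ.1 ∧ 0 ≤ μ.2.1 ∧ 0 ≤ μ.2.2 ∧ μ.1 + μ.2.1 + μ.2.2 = 1

/-- The measure `ρ_β` with `ρ_β(±1) = e^{−β}/(1+2e^{−β})` and `ρ_β(0) = 1/(1+2e^{−β})`. -/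
def rhoBeta (β : ℝ) : ℝ × ℝ × ℝ :=
  (Real.exp (-β) / (1 + 2 * Real.exp (-β)),
   1 / (1 + 2 * Real.exp (-β)),
   Real.exp (-β) / (1 + 2 * Real.exp (-β)))

/-- Relative entropy `R(μ|ρ_β) = Σᵢ μᵢ log(μᵢ/ρ_β(i))` (the convention
`0 · log 0 = 0` holds automatically since `Real.log 0 = 0`). -/
def relEntB (β : ℝ) (μ : ℝ × ℝ × ℝ) : ℝ :=
  μ.1 * Real.log (μ.1 / (rhoBeta β).1) + μ.2.1 * Real.log (μ.2.1 / (rhoBeta β).2.1)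
    + μ.2.2 * Real.log (μ.2.2 / (rhoBeta β).2.2)

/-- `c_β(t) = log[(1 + e^{−β}(e^t + e^{−t}))/(1 + 2e^{−β})]`. -/
def cBeta (β t : ℝ) : ℝ :=
  Real.log ((1 + Real.exp (-β) * (Real.exp t + Real.exp (-t))) / (1 + 2 * Real.exp (-β)))

/-- `J_β(z) = sup_{t ∈ ℝ} {t z − c_β(t)}`, the Legendre–Fenchel transform of `c_β`
(finite on `[-1,1]`, where it is used below). -/
def Jbeta (β z : ℝ) : ℝ := ⨆ t : ℝ, (t * z - cBeta β t)

section Aux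
open Real Set Filter Topology

private lemma mul_log_div_split (x p q : ℝ) (hp : p ≠ 0) (hq : q ≠ 0) :
    x * Real.log (x / q) = x * Real.log (x / p) + x * Real.log (p / q) := by
  rcases eq_or_ne x 0 with rfl | hx
  · simp
  · rw [Real.log_div hx hq, Real.log_div hx hp, Real.log_div hp hq]; ring

/-- the tilted measure -/
def nuT (β t : ℝ) : ℝ × ℝ × ℝ :=
  (Real.exp (-β) * Real.exp (-t) / (1 + Real.exp (-β) * (Real.exp t + Real.exp (-t))),
   1 / (1 + Real.exp (-β) * (Real.exp t + Real.exp (-t))),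
   Real.exp (-β) * Real.exp t / (1 + Real.exp (-β) * (Real.exp t + Real.exp (-t))))

private lemma Z0_pos (β : ℝ) : 0 < 1 + 2 * Real.exp (-β) := by positivity
private lemma Zt_pos (β t : ℝ) : 0 < 1 + Real.exp (-β) * (Real.exp t + Real.exp (-t)) := by
  positivity

private lemma nuT_prob (β t : ℝ) : IsProbVec (nuT β t) := by
  have hZ := Zt_pos β t
  unfold IsProbVec nuT
  refine ⟨by positivity, by positivity, by positivity, ?_⟩
  field_simp
  ring

private lemma relEnt_identity (β t : ℝ) (μ : ℝ × ℝ × ℝ) (hsum : μ.1 + μ.2.1 + μ.2.2 = 1) :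
    μ.1 * Real.log (μ.1 / (nuT β t).1) + μ.2.1 * Real.log (μ.2.1 / (nuT β t).2.1)
      + μ.2.2 * Real.log (μ.2.2 / (nuT β t).2.2)
      = relEntB β μ - t * (μ.2.2 - μ.1) + cBeta β t := by
  have hZ0 := Z0_pos β
  have hZt := Zt_pos β t
  have hr1 : (rhoBeta β).1 ≠ 0 := by have : (0:ℝ) < Real.exp (-β) / (1 + 2 * Real.exp (-β)) := by positivity
                                     exact ne_of_gt this
  have hr0 : (rhoBeta β).2.1 ≠ 0 := by have : (0:ℝ) < 1 / (1 + 2 * Real.exp (-β)) := by positivity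
                                       exact ne_of_gt this
  have hn1 : (nuT β t).1 ≠ 0 := by
    have : (0:ℝ) < Real.exp (-β) * Real.exp (-t) / (1 + Real.exp (-β) * (Real.exp t + Real.exp (-t))) := by positivity
    exact ne_of_gt this
  have hn0 : (nuT β t).2.1 ≠ 0 := by
    have : (0:ℝ) < 1 / (1 + Real.exp (-β) * (Real.exp t + Real.exp (-t))) := by positivity
    exact ne_of_gt this
  have hn2 : (nuT β t).2.2 ≠ 0 := by
    have : (0:ℝ) < Real.exp (-β) * Real.exp t / (1 + Real.exp (-β) * (Real.exp t + Real.exp (-t))) := by positivity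
    exact ne_of_gt this
  -- ratios
  have hq1 : (rhoBeta β).1 / (nuT β t).1
      = Real.exp t * ((1 + Real.exp (-β) * (Real.exp t + Real.exp (-t))) / (1 + 2 * Real.exp (-β))) := by
    simp only [rhoBeta, nuT, Real.exp_neg t]
    have h := Real.exp_ne_zero t
    have h2 := Real.exp_ne_zero (-β)
    field_simp
  have hq0 : (rhoBeta β).2.1 / (nuT β t).2.1
      = (1 + Real.exp (-β) * (Real.exp t + Real.exp (-t))) / (1 + 2 * Real.exp (-β)) := by
    simp only [rhoBeta, nuT]
    field_simp
  have hq2 : (rhoBeta β).2.2 / (nuT β t).2.2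
      = Real.exp (-t) * ((1 + Real.exp (-β) * (Real.exp t + Real.exp (-t))) / (1 + 2 * Real.exp (-β))) := by
    simp only [rhoBeta, nuT, Real.exp_neg t]
    have h := Real.exp_ne_zero t
    have h2 := Real.exp_ne_zero (-β)
    field_simp
  have hZr : (0:ℝ) < (1 + Real.exp (-β) * (Real.exp t + Real.exp (-t))) / (1 + 2 * Real.exp (-β)) := by positivity
  have hc : cBeta β t = Real.log ((1 + Real.exp (-β) * (Real.exp t + Real.exp (-t))) / (1 + 2 * Real.exp (-β))) := rfl
  have l1 : Real.log ((rhoBeta β).1 / (nuT β t).1) = t + cBeta β t := by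
    rw [hq1, Real.log_mul (Real.exp_ne_zero t) (ne_of_gt hZr), Real.log_exp, hc]
  have l0 : Real.log ((rhoBeta β).2.1 / (nuT β t).2.1) = cBeta β t := by
    rw [hq0, hc]
  have l2 : Real.log ((rhoBeta β).2.2 / (nuT β t).2.2) = -t + cBeta β t := by
    rw [hq2, Real.log_mul (Real.exp_ne_zero (-t)) (ne_of_gt hZr), Real.log_exp, hc]
  rw [mul_log_div_split μ.1 (rhoBeta β).1 (nuT β t).1 hr1 hn1,
      mul_log_div_split μ.2.1 (rhoBeta β).2.1 (nuT β t).2.1 hr0 hn0,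
      mul_log_div_split μ.2.2 (rhoBeta β).2.2 (nuT β t).2.2 hr1 hn2,
      l1, l0, l2]
  unfold relEntB
  linear_combination (cBeta β t) * hsum

private lemma gibbs {a b : ℝ} (ha : 0 ≤ a) (hb : 0 < b) : a - b ≤ a * Real.log (a / b) := by
  rcases eq_or_lt_of_le ha with h | h
  · simp [← h, hb.le]
  · have hlog := Real.log_le_sub_one_of_pos (show 0 < b / a by positivity)
    have h1 : Real.log (a / b) = -Real.log (b / a) := by
      rw [← Real.log_inv]; congr 1; field_simp
    have h2 : a * Real.log (b / a) ≤ a * (b / a - 1) :=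
      mul_le_mul_of_nonneg_left hlog h.le
    have h3 : a * (b / a - 1) = b - a := by field_simp
    rw [h1]; nlinarith

private lemma nuT_pos (β t : ℝ) :
    0 < (nuT β t).1 ∧ 0 < (nuT β t).2.1 ∧ 0 < (nuT β t).2.2 := by
  have hZ := Zt_pos β t
  unfold nuT
  exact ⟨by positivity, by positivity, by positivity⟩

/-- main lower bound: `t·m(μ) - c_β(t) ≤ R(μ|ρ_β)` for probability vectors `μ`. -/
private lemma lower_bound {β : ℝ} {μ : ℝ × ℝ × ℝ} (hμ : IsProbVec μ) (t : ℝ) :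
    t * (μ.2.2 - μ.1) - cBeta β t ≤ relEntB β μ := by
  obtain ⟨h1, h2, h3, h4⟩ := hμ
  obtain ⟨p1, p2, p3⟩ := nuT_pos β t
  have g1 := gibbs h1 p1
  have g2 := gibbs h2 p2
  have g3 := gibbs h3 p3
  have hsum := (nuT_prob β t).2.2.2
  have hid := relEnt_identity β t μ h4
  nlinarith [g1, g2, g3]

/-- the relative entropy of the tilted measure  -/
private lemma relEnt_nuT (β t : ℝ) :
    relEntB β (nuT β t) = t * ((nuT β t).2.2 - (nuT β t).1) - cBeta β t := by
  obtain ⟨p1, p2, p3⟩ := nuT_pos β t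
  have hid := relEnt_identity β t (nuT β t) (nuT_prob β t).2.2.2
  rw [div_self (ne_of_gt p1), div_self (ne_of_gt p2), div_self (ne_of_gt p3),
      Real.log_one] at hid
  simp at hid
  linarith

/-- the special interpolation measure with mean `z` -/
private def muZ (z : ℝ) : ℝ × ℝ × ℝ := ((1 - z) / 2, 0, (1 + z) / 2)

private lemma muZ_prob {z : ℝ} (hz : z ∈ Set.Icc (-1:ℝ) 1) : IsProbVec (muZ z) := by
  obtain ⟨h1, h2⟩ := hz
  exact ⟨by unfold muZ; simp; linarith, le_refl 0, by unfold muZ; simp; linarith,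
    by unfold muZ; simp; ring⟩

private lemma muZ_mean (z : ℝ) : (muZ z).2.2 - (muZ z).1 = z := by unfold muZ; ring

private lemma bddAbove_J {β z : ℝ} (hz : z ∈ Set.Icc (-1:ℝ) 1) :
    BddAbove (Set.range fun t => t * z - cBeta β t) := by
  refine ⟨relEntB β (muZ z), ?_⟩
  rintro x ⟨t, rfl⟩
  have := lower_bound (β := β) (muZ_prob hz) t
  rwa [muZ_mean] at this

private lemma J_le_relEnt {β : ℝ} {μ : ℝ × ℝ × ℝ} (hμ : IsProbVec μ) :
    Jbeta β (μ.2.2 - μ.1) ≤ relEntB β μ :=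
  ciSup_le fun t => lower_bound hμ t

private lemma mean_mem_Icc {μ : ℝ × ℝ × ℝ} (hμ : IsProbVec μ) :
    μ.2.2 - μ.1 ∈ Set.Icc (-1:ℝ) 1 := by
  obtain ⟨h1, h2, h3, h4⟩ := hμ
  exact ⟨by linarith, by linarith⟩

private lemma tendsto_exp_neg_top : Tendsto (fun t : ℝ => Real.exp (-t)) atTop (𝓝 0) :=
  Real.tendsto_exp_atBot.comp tendsto_neg_atTop_atBot

/-- mean of the tilted measure -/
private def mfun (β t : ℝ) : ℝ := (nuT β t).2.2 - (nuT β t).1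

private lemma mfun_eq (β t : ℝ) :
    mfun β t = (Real.exp (-β) * Real.exp t - Real.exp (-β) * Real.exp (-t))
        / (1 + Real.exp (-β) * (Real.exp t + Real.exp (-t))) := by
  unfold mfun nuT
  rw [div_sub_div_same]

private lemma mfun_continuous (β : ℝ) : Continuous (mfun β) := by
  simp only [funext (mfun_eq β)]
  exact Continuous.div (by fun_prop) (by fun_prop) (fun t => ne_of_gt (Zt_pos β t))

private lemma mfun_tendsto_top (β : ℝ) : Tendsto (mfun β) atTop (𝓝 1) := by
  have heq : ∀ t : ℝ, mfun β t
      = (Real.exp (-β) - Real.exp (-β) * Real.exp (-t) ^ 2)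
        / (Real.exp (-t) + Real.exp (-β) + Real.exp (-β) * Real.exp (-t) ^ 2) := by
    intro t
    rw [mfun_eq]
    have h1 := Zt_pos β t
    have h2 : (0:ℝ) < Real.exp (-t) + Real.exp (-β) + Real.exp (-β) * Real.exp (-t) ^ 2 := by
      positivity
    rw [div_eq_div_iff (ne_of_gt h1) (ne_of_gt h2)]
    simp only [Real.exp_neg t]
    have h := Real.exp_ne_zero t
    field_simp
    ring
  simp only [funext heq]
  have hnum : Tendsto (fun t : ℝ => Real.exp (-β) - Real.exp (-β) * Real.exp (-t) ^ 2)
      atTop (𝓝 (Real.exp (-β) - Real.exp (-β) * 0 ^ 2)) := by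
    exact (tendsto_const_nhds.sub (tendsto_const_nhds.mul (tendsto_exp_neg_top.pow 2)))
  have hden : Tendsto (fun t : ℝ => Real.exp (-t) + Real.exp (-β) + Real.exp (-β) * Real.exp (-t) ^ 2)
      atTop (𝓝 (0 + Real.exp (-β) + Real.exp (-β) * 0 ^ 2)) := by
    exact ((tendsto_exp_neg_top.add tendsto_const_nhds).add
      (tendsto_const_nhds.mul (tendsto_exp_neg_top.pow 2)))
  have := hnum.div hden (by simp [Real.exp_ne_zero])
  have hval : (Real.exp (-β) - Real.exp (-β) * 0 ^ 2) / (0 + Real.exp (-β) + Real.exp (-β) * 0 ^ 2)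
      = 1 := by
    simp [Real.exp_ne_zero]
  rwa [hval] at this

private lemma mfun_tendsto_bot (β : ℝ) : Tendsto (mfun β) atBot (𝓝 (-1)) := by
  have heq : ∀ t : ℝ, mfun β t
      = (Real.exp (-β) * Real.exp t ^ 2 - Real.exp (-β))
        / (Real.exp t + Real.exp (-β) + Real.exp (-β) * Real.exp t ^ 2) := by
    intro t
    rw [mfun_eq]
    have h1 := Zt_pos β t
    have h2 : (0:ℝ) < Real.exp t + Real.exp (-β) + Real.exp (-β) * Real.exp t ^ 2 := by
      positivity
    rw [div_eq_div_iff (ne_of_gt h1) (ne_of_gt h2)]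
    simp only [Real.exp_neg t]
    have h := Real.exp_ne_zero t
    field_simp
    ring
  simp only [funext heq]
  have hexp : Tendsto (fun t : ℝ => Real.exp t) atBot (𝓝 0) := Real.tendsto_exp_atBot
  have hnum : Tendsto (fun t : ℝ => Real.exp (-β) * Real.exp t ^ 2 - Real.exp (-β))
      atBot (𝓝 (Real.exp (-β) * 0 ^ 2 - Real.exp (-β))) :=
    (tendsto_const_nhds.mul (hexp.pow 2)).sub tendsto_const_nhds
  have hden : Tendsto (fun t : ℝ => Real.exp t + Real.exp (-β) + Real.exp (-β) * Real.exp t ^ 2)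
      atBot (𝓝 (0 + Real.exp (-β) + Real.exp (-β) * 0 ^ 2)) :=
    (hexp.add tendsto_const_nhds).add (tendsto_const_nhds.mul (hexp.pow 2))
  have := hnum.div hden (by simp [Real.exp_ne_zero])
  have hval : (Real.exp (-β) * 0 ^ 2 - Real.exp (-β)) / (0 + Real.exp (-β) + Real.exp (-β) * 0 ^ 2)
      = -1 := by
    simp [Real.exp_ne_zero]
  rwa [hval] at this

private lemma relEnt_delta1 (β : ℝ) :
    relEntB β (0, 0, 1) = β + Real.log (1 + 2 * Real.exp (-β)) := by
  unfold relEntB rhoBeta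
  norm_num
  rw [Real.log_div (ne_of_gt (Z0_pos β)) (Real.exp_ne_zero _),
    Real.log_exp]
  ring

private lemma relEnt_deltam1 (β : ℝ) :
    relEntB β (1, 0, 0) = β + Real.log (1 + 2 * Real.exp (-β)) := by
  unfold relEntB rhoBeta
  norm_num
  rw [Real.log_div (ne_of_gt (Z0_pos β)) (Real.exp_ne_zero _),
    Real.log_exp]
  ring

private lemma tc_top (β : ℝ) :
    Tendsto (fun t : ℝ => t * 1 - cBeta β t) atTop
      (𝓝 (β + Real.log (1 + 2 * Real.exp (-β)))) := by
  have hZ0 := Z0_pos β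
  have heq : ∀ t : ℝ, t * 1 - cBeta β t
      = -Real.log ((Real.exp (-t) + Real.exp (-β) + Real.exp (-β) * Real.exp (-t) ^ 2)
          / (1 + 2 * Real.exp (-β))) := by
    intro t
    have hZt := Zt_pos β t
    have key : (Real.exp (-t) + Real.exp (-β) + Real.exp (-β) * Real.exp (-t) ^ 2)
          / (1 + 2 * Real.exp (-β))
        = Real.exp (-t) * ((1 + Real.exp (-β) * (Real.exp t + Real.exp (-t)))
          / (1 + 2 * Real.exp (-β))) := by
      rw [mul_div_assoc']
      congr 1
      simp only [Real.exp_neg t]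
      have h := Real.exp_ne_zero t
      field_simp
      ring
    have hZr : (0:ℝ) < (1 + Real.exp (-β) * (Real.exp t + Real.exp (-t)))
        / (1 + 2 * Real.exp (-β)) := by positivity
    rw [key, Real.log_mul (Real.exp_ne_zero _) (ne_of_gt hZr), Real.log_exp]
    unfold cBeta
    ring
  simp only [funext heq]
  have hinner : Tendsto (fun t : ℝ =>
      (Real.exp (-t) + Real.exp (-β) + Real.exp (-β) * Real.exp (-t) ^ 2)
        / (1 + 2 * Real.exp (-β))) atTop
      (𝓝 ((0 + Real.exp (-β) + Real.exp (-β) * 0 ^ 2) / (1 + 2 * Real.exp (-β)))) :=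
    (((tendsto_exp_neg_top.add tendsto_const_nhds).add
      (tendsto_const_nhds.mul (tendsto_exp_neg_top.pow 2))).div tendsto_const_nhds
        (ne_of_gt hZ0))
  have hpos : (0:ℝ) < (0 + Real.exp (-β) + Real.exp (-β) * 0 ^ 2) / (1 + 2 * Real.exp (-β)) := by
    positivity
  have hlog := ((Real.continuousAt_log (ne_of_gt hpos)).tendsto.comp hinner).neg
  have hval : -Real.log ((0 + Real.exp (-β) + Real.exp (-β) * 0 ^ 2) / (1 + 2 * Real.exp (-β)))
      = β + Real.log (1 + 2 * Real.exp (-β)) := by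
    rw [show (0 + Real.exp (-β) + Real.exp (-β) * 0 ^ 2 : ℝ) = Real.exp (-β) by ring,
      Real.log_div (Real.exp_ne_zero _) (ne_of_gt hZ0), Real.log_exp]
    ring
  rwa [hval] at hlog

private lemma tc_bot (β : ℝ) :
    Tendsto (fun t : ℝ => t * (-1) - cBeta β t) atBot
      (𝓝 (β + Real.log (1 + 2 * Real.exp (-β)))) := by
  have hZ0 := Z0_pos β
  have heq : ∀ t : ℝ, t * (-1) - cBeta β t
      = -Real.log ((Real.exp t + Real.exp (-β) + Real.exp (-β) * Real.exp t ^ 2)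
          / (1 + 2 * Real.exp (-β))) := by
    intro t
    have hZt := Zt_pos β t
    have key : (Real.exp t + Real.exp (-β) + Real.exp (-β) * Real.exp t ^ 2)
          / (1 + 2 * Real.exp (-β))
        = Real.exp t * ((1 + Real.exp (-β) * (Real.exp t + Real.exp (-t)))
          / (1 + 2 * Real.exp (-β))) := by
      rw [mul_div_assoc']
      congr 1
      simp only [Real.exp_neg t]
      have h := Real.exp_ne_zero t
      field_simp
      ring
    have hZr : (0:ℝ) < (1 + Real.exp (-β) * (Real.exp t + Real.exp (-t)))
        / (1 + 2 * Real.exp (-β)) := by positivity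
    rw [key, Real.log_mul (Real.exp_ne_zero _) (ne_of_gt hZr), Real.log_exp]
    unfold cBeta
    ring
  simp only [funext heq]
  have hexp : Tendsto (fun t : ℝ => Real.exp t) atBot (𝓝 0) := Real.tendsto_exp_atBot
  have hinner : Tendsto (fun t : ℝ =>
      (Real.exp t + Real.exp (-β) + Real.exp (-β) * Real.exp t ^ 2)
        / (1 + 2 * Real.exp (-β))) atBot
      (𝓝 ((0 + Real.exp (-β) + Real.exp (-β) * 0 ^ 2) / (1 + 2 * Real.exp (-β)))) :=
    (((hexp.add tendsto_const_nhds).add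
      (tendsto_const_nhds.mul (hexp.pow 2))).div tendsto_const_nhds (ne_of_gt hZ0))
  have hpos : (0:ℝ) < (0 + Real.exp (-β) + Real.exp (-β) * 0 ^ 2) / (1 + 2 * Real.exp (-β)) := by
    positivity
  have hlog := ((Real.continuousAt_log (ne_of_gt hpos)).tendsto.comp hinner).neg
  have hval : -Real.log ((0 + Real.exp (-β) + Real.exp (-β) * 0 ^ 2) / (1 + 2 * Real.exp (-β)))
      = β + Real.log (1 + 2 * Real.exp (-β)) := by
    rw [show (0 + Real.exp (-β) + Real.exp (-β) * 0 ^ 2 : ℝ) = Real.exp (-β) by ring,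
      Real.log_div (Real.exp_ne_zero _) (ne_of_gt hZ0), Real.log_exp]
    ring
  rwa [hval] at hlog

/-- Attainment of `J_β(z)` by a probability vector with mean `z`. -/
private lemma attain {β z : ℝ} (hz : z ∈ Set.Icc (-1:ℝ) 1) :
    ∃ μ : ℝ × ℝ × ℝ, IsProbVec μ ∧ μ.2.2 - μ.1 = z ∧ relEntB β μ ≤ Jbeta β z := by
  rcases eq_or_lt_of_le hz.1 with hz1 | hz1
  · -- z = -1
    subst hz1
    refine ⟨(1, 0, 0), ⟨by norm_num, le_refl 0, le_refl 0, by norm_num⟩, by norm_num, ?_⟩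
    rw [relEnt_deltam1]
    exact le_of_tendsto' (tc_bot β) fun t => le_ciSup (bddAbove_J hz) t
  rcases eq_or_lt_of_le hz.2 with hz2 | hz2
  · -- z = 1
    subst hz2
    refine ⟨(0, 0, 1), ⟨le_refl 0, le_refl 0, by norm_num, by norm_num⟩, by norm_num, ?_⟩
    rw [relEnt_delta1]
    exact le_of_tendsto' (tc_top β) fun t => le_ciSup (bddAbove_J hz) t
  · -- interior
    obtain ⟨a, ha⟩ := ((mfun_tendsto_bot β).eventually_lt_const hz1).exists
    obtain ⟨b, hb⟩ := ((mfun_tendsto_top β).eventually_const_lt hz2).exists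
    obtain ⟨t, ht⟩ := intermediate_value_univ a b (mfun_continuous β) ⟨ha.le, hb.le⟩
    refine ⟨nuT β t, nuT_prob β t, ht, ?_⟩
    rw [relEnt_nuT β t]
    show t * mfun β t - cBeta β t ≤ _
    rw [ht]
    exact le_ciSup (bddAbove_J hz) t

private lemma mul_log_div' (x r : ℝ) (hr : r ≠ 0) :
    x * Real.log (x / r) = x * Real.log x - x * Real.log r := by
  rcases eq_or_ne x 0 with rfl | hx
  · simp
  · rw [Real.log_div hx hr]; ring

private lemma relEntB_continuous (β : ℝ) : Continuous (relEntB β) := by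
  have hr1 : (rhoBeta β).1 ≠ 0 := by
    have : (0:ℝ) < Real.exp (-β) / (1 + 2 * Real.exp (-β)) := by positivity
    exact ne_of_gt this
  have hr0 : (rhoBeta β).2.1 ≠ 0 := by
    have : (0:ℝ) < 1 / (1 + 2 * Real.exp (-β)) := by positivity
    exact ne_of_gt this
  have heq : relEntB β = fun μ : ℝ × ℝ × ℝ =>
      (μ.1 * Real.log μ.1 - μ.1 * Real.log (rhoBeta β).1)
      + (μ.2.1 * Real.log μ.2.1 - μ.2.1 * Real.log (rhoBeta β).2.1)
      + (μ.2.2 * Real.log μ.2.2 - μ.2.2 * Real.log (rhoBeta β).2.2) := by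
    funext μ
    unfold relEntB
    have hr2 : (rhoBeta β).2.2 ≠ 0 := hr1
    rw [mul_log_div' _ _ hr1, mul_log_div' _ _ hr0, mul_log_div' _ _ hr2]
  have hg : ∀ r : ℝ, Continuous fun x : ℝ => x * Real.log x - x * Real.log r := fun r =>
    Real.continuous_mul_log.sub (continuous_id.mul continuous_const)
  have c1 : Continuous fun ν : ℝ × ℝ × ℝ => ν.1 := continuous_fst
  have c2 : Continuous fun ν : ℝ × ℝ × ℝ => ν.2.1 := (continuous_fst.comp continuous_snd)
  have c3 : Continuous fun ν : ℝ × ℝ × ℝ => ν.2.2 := (continuous_snd.comp continuous_snd)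
  rw [heq]
  exact (((hg _).comp c1).add ((hg _).comp c2)).add ((hg _).comp c3)

private lemma probVec_compact : IsCompact {ν : ℝ × ℝ × ℝ | IsProbVec ν} := by
  have c1 : Continuous fun ν : ℝ × ℝ × ℝ => ν.1 := continuous_fst
  have c2 : Continuous fun ν : ℝ × ℝ × ℝ => ν.2.1 := (continuous_fst.comp continuous_snd)
  have c3 : Continuous fun ν : ℝ × ℝ × ℝ => ν.2.2 := (continuous_snd.comp continuous_snd)
  have hclosed : IsClosed {ν : ℝ × ℝ × ℝ | IsProbVec ν} := by
    have hset : {ν : ℝ × ℝ × ℝ | IsProbVec ν}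
        = ({ν : ℝ × ℝ × ℝ | 0 ≤ ν.1} ∩ {ν | 0 ≤ ν.2.1} ∩ {ν | 0 ≤ ν.2.2}
          ∩ {ν | ν.1 + ν.2.1 + ν.2.2 = 1}) := by
      ext ν; simp only [Set.mem_setOf_eq, Set.mem_inter_iff, IsProbVec]; tauto
    rw [hset]
    exact (((isClosed_le continuous_const c1).inter (isClosed_le continuous_const c2)).inter
      (isClosed_le continuous_const c3)).inter
      (isClosed_eq ((c1.add c2).add c3) continuous_const)
  have hsub : {ν : ℝ × ℝ × ℝ | IsProbVec ν}
      ⊆ Set.Icc (0:ℝ) 1 ×ˢ (Set.Icc (0:ℝ) 1 ×ˢ Set.Icc (0:ℝ) 1) := by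
    rintro ⟨a, b, c⟩ ⟨h1, h2, h3, h4⟩
    simp only [Set.mem_prod, Set.mem_Icc] at *
    refine ⟨⟨h1, by linarith⟩, ⟨h2, by linarith⟩, ⟨h3, by linarith⟩⟩
  exact IsCompact.of_isClosed_subset
    (isCompact_Icc.prod (isCompact_Icc.prod isCompact_Icc)) hclosed hsub

end Aux

open Real Set Filter Topology

/-- For all `β > 0`, `K > 0`: the minimum over probability vectors of
`R(μ|ρ_β) − βK(μ₁ − μ₋₁)²` and the minimum over `z ∈ [-1,1]` of `J_β(z) − βKz²` are
both attained and equal. -/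
theorem min_relEntB_eq_min_J (β K : ℝ) (hβ : 0 < β) (hK : 0 < K) :
    (∃ μ : ℝ × ℝ × ℝ, IsProbVec μ ∧
      IsMinOn (fun ν : ℝ × ℝ × ℝ => relEntB β ν - β * K * (ν.2.2 - ν.1) ^ 2)
        {ν | IsProbVec ν} μ) ∧
    (∃ z ∈ Set.Icc (-1 : ℝ) 1,
      IsMinOn (fun z => Jbeta β z - β * K * z ^ 2) (Set.Icc (-1 : ℝ) 1) z) ∧
    sInf ((fun ν : ℝ × ℝ × ℝ => relEntB β ν - β * K * (ν.2.2 - ν.1) ^ 2) ''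
        {ν | IsProbVec ν}) =
      sInf ((fun z => Jbeta β z - β * K * z ^ 2) '' Set.Icc (-1 : ℝ) 1) := by
  set f : ℝ × ℝ × ℝ → ℝ := fun ν => relEntB β ν - β * K * (ν.2.2 - ν.1) ^ 2 with hf
  set g : ℝ → ℝ := fun z => Jbeta β z - β * K * z ^ 2 with hg
  have hfc : Continuous f :=
    (relEntB_continuous β).sub (continuous_const.mul
      (((continuous_snd.comp continuous_snd).sub continuous_fst).pow 2))
  have hne : {ν : ℝ × ℝ × ℝ | IsProbVec ν}.Nonempty :=
    ⟨(1, 0, 0), by refine ⟨by norm_num, le_refl 0, le_refl 0, by norm_num⟩⟩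
  obtain ⟨μs, hμS, hmin⟩ := probVec_compact.exists_isMinOn hne hfc.continuousOn
  set zs := μs.2.2 - μs.1 with hzsdef
  have hzs : zs ∈ Set.Icc (-1:ℝ) 1 := mean_mem_Icc hμS
  have key1 : g zs ≤ f μs := by
    have h := J_le_relEnt (β := β) hμS
    exact sub_le_sub_right h _
  have key2 : ∀ z ∈ Set.Icc (-1:ℝ) 1, f μs ≤ g z := by
    intro z hzI
    obtain ⟨ν, hν, hmean, hle⟩ := attain (β := β) hzI
    have h1 : f μs ≤ f ν := isMinOn_iff.mp hmin ν hν
    have h2 : f ν ≤ g z := by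
      have : f ν = relEntB β ν - β * K * z ^ 2 := by rw [hf]; simp only; rw [hmean]
      rw [this]
      exact sub_le_sub_right hle _
    linarith
  have hgmin : IsMinOn g (Set.Icc (-1:ℝ) 1) zs :=
    isMinOn_iff.mpr fun z hzI => le_trans key1 (key2 z hzI)
  have hfg : f μs = g zs := le_antisymm (key2 zs hzs) key1
  refine ⟨⟨μs, hμS, hmin⟩, ⟨zs, hzs, hgmin⟩, ?_⟩
  have e1 : sInf (f '' {ν | IsProbVec ν}) = f μs :=
    IsLeast.csInf_eq ⟨⟨μs, hμS, rfl⟩, by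
      rintro y ⟨x, hx, rfl⟩; exact isMinOn_iff.mp hmin x hx⟩
  have e2 : sInf (g '' Set.Icc (-1:ℝ) 1) = g zs :=
    IsLeast.csInf_eq ⟨⟨zs, hzs, rfl⟩, by
      rintro y ⟨x, hx, rfl⟩; exact isMinOn_iff.mp hgmin x hx⟩
  rw [e1, e2, hfg]
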